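/- With σ(u₁,u₃) = u₁³/3 − u₃ and ℘ functions as above, let φ = ℘₁₁℘₁₃₃ − ℘₁₃℘₁₁₃ + ℘₃₃₃, φ₁ = ∂₁φ, φ₁₁ = ∂₁φ₁, and let ℘₁₁(2u) be obtained by substituting 2u into ℘₁₁. Then on the set where σ(u) ≠ 0, σ(2u) ≠ 0, and φ(u) ≠ 0, the duplication formula ℘₁₁(2u) = ℘₁₁(u) + (φ₁(u)² − φ(u)φ₁₁(u))/(4φ(u)²) holds. -/

import Mathlib

noncomputable section

def σr (u₁ u₃ : ℂ) : ℂ := u₁ ^ 3 / 3 - u₃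
def P11 (u₁ u₃ : ℂ) : ℂ := (u₁ ^ 4 / 3 + 2 * u₁ * u₃) / (σr u₁ u₃) ^ 2
def P13 (u₁ u₃ : ℂ) : ℂ := -u₁ ^ 2 / (σr u₁ u₃) ^ 2
def P33 (u₁ u₃ : ℂ) : ℂ := 1 / (σr u₁ u₃) ^ 2
def P113 (u₁ u₃ : ℂ) : ℂ := deriv (fun y => P11 u₁ y) u₃
def P133 (u₁ u₃ : ℂ) : ℂ := deriv (fun y => P13 u₁ y) u₃
def P333 (u₁ u₃ : ℂ) : ℂ := deriv (fun y => P33 u₁ y) u₃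
def Φ (u₁ u₃ : ℂ) : ℂ :=
  P11 u₁ u₃ * P133 u₁ u₃ - P13 u₁ u₃ * P113 u₁ u₃ + P333 u₁ u₃
def Φ1 (u₁ u₃ : ℂ) : ℂ := deriv (fun x => Φ x u₃) u₁
def Φ11 (u₁ u₃ : ℂ) : ℂ := deriv (fun x => Φ1 x u₃) u₁

lemma w_ne (u₁ u₃ : ℂ) (h : σr u₁ u₃ ≠ 0) : u₁ ^ 3 - 3 * u₃ ≠ 0 := by
  intro hz
  exact h (by rw [σr]; linear_combination hz / 3)

lemma hasDerivAt_sq (u₁ u₃ : ℂ) :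
    HasDerivAt (fun y : ℂ => (u₁ ^ 3 / 3 - y) ^ 2) (2 * (u₁ ^ 3 / 3 - u₃) * (-1)) u₃ := by
  have h1 : HasDerivAt (fun y : ℂ => u₁ ^ 3 / 3 - y) (0 - 1) u₃ :=
    (hasDerivAt_const u₃ (u₁ ^ 3 / 3)).sub (hasDerivAt_id u₃)
  have : HasDerivAt (fun y : ℂ => (u₁ ^ 3 / 3 - y) ^ 2) _ u₃ := h1.pow 2
  simpa using this

lemma P11_eq (u₁ u₃ : ℂ) (h : σr u₁ u₃ ≠ 0) :
    P11 u₁ u₃ = (3 * u₁ ^ 4 + 18 * u₁ * u₃) / (u₁ ^ 3 - 3 * u₃) ^ 2 := by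
  have hw := w_ne u₁ u₃ h
  rw [P11, σr] at *
  rw [div_eq_div_iff (pow_ne_zero 2 h) (pow_ne_zero 2 hw)]
  ring

lemma P13_eq (u₁ u₃ : ℂ) (h : σr u₁ u₃ ≠ 0) :
    P13 u₁ u₃ = -9 * u₁ ^ 2 / (u₁ ^ 3 - 3 * u₃) ^ 2 := by
  have hw := w_ne u₁ u₃ h
  rw [P13, σr] at *
  rw [div_eq_div_iff (pow_ne_zero 2 h) (pow_ne_zero 2 hw)]
  ring

lemma P113_eq (u₁ u₃ : ℂ) (h : σr u₁ u₃ ≠ 0) :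
    P113 u₁ u₃ = (36 * u₁ ^ 4 + 54 * u₁ * u₃) / (u₁ ^ 3 - 3 * u₃) ^ 3 := by
  have hw := w_ne u₁ u₃ h
  have hnum : HasDerivAt (fun y : ℂ => u₁ ^ 4 / 3 + 2 * u₁ * y) (2 * u₁) u₃ := by
    have h' : HasDerivAt (fun y : ℂ => u₁ ^ 4 / 3 + 2 * u₁ * y) _ u₃ :=
      (hasDerivAt_const u₃ (u₁ ^ 4 / 3)).add ((hasDerivAt_id u₃).const_mul (2 * u₁))
    simpa using h'
  have hden := hasDerivAt_sq u₁ u₃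
  rw [σr] at h
  have hd : ((u₁ ^ 3 / 3 - u₃) ^ 2 : ℂ) ≠ 0 := pow_ne_zero _ h
  have hder := (hnum.fun_div hden hd).deriv
  rw [P113, show (fun y => P11 u₁ y) = fun y : ℂ =>
    (u₁ ^ 4 / 3 + 2 * u₁ * y) / (u₁ ^ 3 / 3 - y) ^ 2 from rfl, hder,
    div_eq_div_iff (pow_ne_zero 2 hd) (pow_ne_zero 3 hw)]
  ring

lemma P133_eq (u₁ u₃ : ℂ) (h : σr u₁ u₃ ≠ 0) :
    P133 u₁ u₃ = -54 * u₁ ^ 2 / (u₁ ^ 3 - 3 * u₃) ^ 3 := by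
  have hw := w_ne u₁ u₃ h
  have hnum : HasDerivAt (fun _ : ℂ => -u₁ ^ 2) 0 u₃ := hasDerivAt_const u₃ _
  have hden := hasDerivAt_sq u₁ u₃
  rw [σr] at h
  have hd : ((u₁ ^ 3 / 3 - u₃) ^ 2 : ℂ) ≠ 0 := pow_ne_zero _ h
  have hder := (hnum.fun_div hden hd).deriv
  rw [P133, show (fun y => P13 u₁ y) = fun y : ℂ =>
    -u₁ ^ 2 / (u₁ ^ 3 / 3 - y) ^ 2 from rfl, hder,
    div_eq_div_iff (pow_ne_zero 2 hd) (pow_ne_zero 3 hw)]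
  ring

lemma P333_eq (u₁ u₃ : ℂ) (h : σr u₁ u₃ ≠ 0) :
    P333 u₁ u₃ = 54 / (u₁ ^ 3 - 3 * u₃) ^ 3 := by
  have hw := w_ne u₁ u₃ h
  have hnum : HasDerivAt (fun _ : ℂ => (1 : ℂ)) 0 u₃ := hasDerivAt_const u₃ _
  have hden := hasDerivAt_sq u₁ u₃
  rw [σr] at h
  have hd : ((u₁ ^ 3 / 3 - u₃) ^ 2 : ℂ) ≠ 0 := pow_ne_zero _ h
  have hder := (hnum.fun_div hden hd).deriv
  rw [P333, show (fun y => P33 u₁ y) = fun y : ℂ =>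
    1 / (u₁ ^ 3 / 3 - y) ^ 2 from rfl, hder,
    div_eq_div_iff (pow_ne_zero 2 hd) (pow_ne_zero 3 hw)]
  ring

lemma Φ_eq (u₁ u₃ : ℂ) (h : σr u₁ u₃ ≠ 0) :
    Φ u₁ u₃ = (216 * u₁ ^ 3 - 162 * u₃) / (u₁ ^ 3 - 3 * u₃) ^ 4 := by
  have hw := w_ne u₁ u₃ h
  have h2 : ((u₁ ^ 3 - 3 * u₃) ^ 2 : ℂ) ≠ 0 := pow_ne_zero _ hw
  have h3 : ((u₁ ^ 3 - 3 * u₃) ^ 3 : ℂ) ≠ 0 := pow_ne_zero _ hw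
  have h4 : ((u₁ ^ 3 - 3 * u₃) ^ 4 : ℂ) ≠ 0 := pow_ne_zero _ hw
  rw [Φ, P11_eq u₁ u₃ h, P13_eq u₁ u₃ h, P113_eq u₁ u₃ h, P133_eq u₁ u₃ h, P333_eq u₁ u₃ h,
    div_mul_div_comm, div_mul_div_comm, ← sub_div,
    div_add_div _ _ (mul_ne_zero h2 h3) h3,
    div_eq_div_iff (mul_ne_zero (mul_ne_zero h2 h3) h3) h4]
  ring

lemma Φ1_eq (u₁ u₃ : ℂ) (h : σr u₁ u₃ ≠ 0) :
    Φ1 u₁ u₃ = -1944 * u₁ ^ 5 / (u₁ ^ 3 - 3 * u₃) ^ 5 := by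
  have hw := w_ne u₁ u₃ h
  have hc : ContinuousAt (fun x : ℂ => σr x u₃) u₁ := by
    unfold σr; fun_prop
  have hev : ∀ᶠ x in nhds u₁, σr x u₃ ≠ 0 := hc.eventually_ne h
  have hev2 : (fun x => Φ x u₃) =ᶠ[nhds u₁]
      (fun x => (216 * x ^ 3 - 162 * u₃) / (x ^ 3 - 3 * u₃) ^ 4) := by
    filter_upwards [hev] with x hx
    rw [Φ_eq x u₃ hx]
  rw [Φ1, hev2.deriv_eq]
  have hnum : HasDerivAt (fun x : ℂ => 216 * x ^ 3 - 162 * u₃) (216 * (3 * u₁ ^ 2) - 0) u₁ :=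
    ((hasDerivAt_pow 3 u₁).const_mul 216).sub (hasDerivAt_const u₁ (162 * u₃))
  have hden : HasDerivAt (fun x : ℂ => (x ^ 3 - 3 * u₃) ^ 4)
      (4 * (u₁ ^ 3 - 3 * u₃) ^ 3 * (3 * u₁ ^ 2 - 0)) u₁ :=
    ((hasDerivAt_pow 3 u₁).sub (hasDerivAt_const u₁ (3 * u₃))).pow 4
  have hd : ((u₁ ^ 3 - 3 * u₃) ^ 4 : ℂ) ≠ 0 := pow_ne_zero _ hw
  rw [(hnum.fun_div hden hd).deriv,
    div_eq_div_iff (pow_ne_zero 2 hd) (pow_ne_zero 5 hw)]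
  ring

lemma Φ11_eq (u₁ u₃ : ℂ) (h : σr u₁ u₃ ≠ 0) :
    Φ11 u₁ u₃ = (19440 * u₁ ^ 7 + 29160 * u₁ ^ 4 * u₃) / (u₁ ^ 3 - 3 * u₃) ^ 6 := by
  have hw := w_ne u₁ u₃ h
  have hc : ContinuousAt (fun x : ℂ => σr x u₃) u₁ := by
    unfold σr; fun_prop
  have hev : ∀ᶠ x in nhds u₁, σr x u₃ ≠ 0 := hc.eventually_ne h
  have hev2 : (fun x => Φ1 x u₃) =ᶠ[nhds u₁]
      (fun x => -1944 * x ^ 5 / (x ^ 3 - 3 * u₃) ^ 5) := by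
    filter_upwards [hev] with x hx
    rw [Φ1_eq x u₃ hx]
  rw [Φ11, hev2.deriv_eq]
  have hnum : HasDerivAt (fun x : ℂ => -1944 * x ^ 5) (-1944 * (5 * u₁ ^ 4)) u₁ :=
    (hasDerivAt_pow 5 u₁).const_mul (-1944)
  have hden : HasDerivAt (fun x : ℂ => (x ^ 3 - 3 * u₃) ^ 5)
      (5 * (u₁ ^ 3 - 3 * u₃) ^ 4 * (3 * u₁ ^ 2 - 0)) u₁ :=
    ((hasDerivAt_pow 3 u₁).sub (hasDerivAt_const u₁ (3 * u₃))).pow 5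
  have hd : ((u₁ ^ 3 - 3 * u₃) ^ 5 : ℂ) ≠ 0 := pow_ne_zero _ hw
  rw [(hnum.fun_div hden hd).deriv,
    div_eq_div_iff (pow_ne_zero 2 hd) (pow_ne_zero 6 hw)]
  ring

theorem stmt_15 (u₁ u₃ : ℂ) (h : σr u₁ u₃ ≠ 0)
    (h2 : σr (2 * u₁) (2 * u₃) ≠ 0) (hφ : Φ u₁ u₃ ≠ 0) :
    P11 (2 * u₁) (2 * u₃) =
      P11 u₁ u₃ +
        ((Φ1 u₁ u₃) ^ 2 - Φ u₁ u₃ * Φ11 u₁ u₃) / (4 * (Φ u₁ u₃) ^ 2) := by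
  have hw := w_ne u₁ u₃ h
  have hW := w_ne (2 * u₁) (2 * u₃) h2
  have hF : (216 * u₁ ^ 3 - 162 * u₃ : ℂ) ≠ 0 := by
    rw [Φ_eq u₁ u₃ h] at hφ
    intro hz
    exact hφ (by rw [hz, zero_div])
  have hF2 : ((216 * u₁ ^ 3 - 162 * u₃ : ℂ)) ^ 2 ≠ 0 := pow_ne_zero _ hF
  have h4F : (4 * (216 * u₁ ^ 3 - 162 * u₃ : ℂ) ^ 2) ≠ 0 := mul_ne_zero (by norm_num : (4:ℂ) ≠ 0) hF2
  have key : ((-1944 * u₁ ^ 5 / (u₁ ^ 3 - 3 * u₃) ^ 5) ^ 2 -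
        (216 * u₁ ^ 3 - 162 * u₃) / (u₁ ^ 3 - 3 * u₃) ^ 4 *
          ((19440 * u₁ ^ 7 + 29160 * u₁ ^ 4 * u₃) / (u₁ ^ 3 - 3 * u₃) ^ 6)) /
        (4 * ((216 * u₁ ^ 3 - 162 * u₃) / (u₁ ^ 3 - 3 * u₃) ^ 4) ^ 2) =
      ((-1944 * u₁ ^ 5) ^ 2 -
          (216 * u₁ ^ 3 - 162 * u₃) * (19440 * u₁ ^ 7 + 29160 * u₁ ^ 4 * u₃)) /
        (4 * (216 * u₁ ^ 3 - 162 * u₃) ^ 2 * (u₁ ^ 3 - 3 * u₃) ^ 2) := by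
    rw [div_pow, div_pow, div_mul_div_comm, mul_div_assoc',
      show ((u₁ ^ 3 - 3 * u₃ : ℂ) ^ 5) ^ 2 = (u₁ ^ 3 - 3 * u₃) ^ 10 from by ring,
      show ((u₁ ^ 3 - 3 * u₃ : ℂ) ^ 4) ^ 2 = (u₁ ^ 3 - 3 * u₃) ^ 8 from by ring,
      show ((u₁ ^ 3 - 3 * u₃ : ℂ) ^ 4 * (u₁ ^ 3 - 3 * u₃) ^ 6) = (u₁ ^ 3 - 3 * u₃) ^ 10 from by
        ring,
      ← sub_div, div_div_div_comm,
      show ((u₁ ^ 3 - 3 * u₃ : ℂ) ^ 10 / (u₁ ^ 3 - 3 * u₃) ^ 8) = (u₁ ^ 3 - 3 * u₃) ^ 2 from by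
        rw [div_eq_iff (pow_ne_zero 8 hw)]; ring,
      div_div]
  rw [P11_eq (2 * u₁) (2 * u₃) h2, P11_eq u₁ u₃ h, Φ_eq u₁ u₃ h, Φ1_eq u₁ u₃ h,
    Φ11_eq u₁ u₃ h, key,
    div_add_div _ _ (pow_ne_zero 2 hw) (mul_ne_zero h4F (pow_ne_zero 2 hw)),
    div_eq_div_iff (pow_ne_zero 2 hW)
      (mul_ne_zero (pow_ne_zero 2 hw) (mul_ne_zero h4F (pow_ne_zero 2 hw)))]
  ring
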